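/- Let X be an m×s real matrix and let Q̄ (m×s) and R̄ (s×s) be matrices with R̄ invertible, satisfying R̄ᵀ R̄ = Xᵀ X + E and Q̄ R̄ = X + D for some matrices E and D. Set F = Xᵀ D + Dᵀ X + Dᵀ D. Then I_s − Q̄ᵀ Q̄ = R̄⁻ᵀ (E − F) R̄⁻¹, and consequently ‖I_s − Q̄ᵀ Q̄‖₂ ≤ ‖R̄⁻¹‖₂² · (‖E‖₂ + ‖F‖₂). -/

import Mathlib

open Matrix
open scoped Matrix.Norms.L2Operator

/-- **Second-order loss-of-orthogonality bound (Section 4.1).**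
If `R̄` is invertible, `R̄ᵀ R̄ = Xᵀ X + E` and `Q̄ R̄ = X + D`, then with
`F = Xᵀ D + Dᵀ X + Dᵀ D` we have `I - Q̄ᵀ Q̄ = R̄⁻ᵀ (E - F) R̄⁻¹` and
`‖I - Q̄ᵀ Q̄‖₂ ≤ ‖R̄⁻¹‖₂² (‖E‖₂ + ‖F‖₂)`, where `‖·‖` is the spectral norm. -/
theorem loss_of_orthogonality_bound (m s : ℕ)
    (X Qbar D : Matrix (Fin m) (Fin s) ℝ)
    (Rbar E : Matrix (Fin s) (Fin s) ℝ)
    (hinv : IsUnit Rbar)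
    (hChol : Rbarᵀ * Rbar = Xᵀ * X + E)
    (hQR : Qbar * Rbar = X + D) :
    1 - Qbarᵀ * Qbar = (Rbar⁻¹)ᵀ * (E - (Xᵀ * D + Dᵀ * X + Dᵀ * D)) * Rbar⁻¹ ∧
      ‖1 - Qbarᵀ * Qbar‖ ≤ ‖Rbar⁻¹‖ ^ 2 * (‖E‖ + ‖Xᵀ * D + Dᵀ * X + Dᵀ * D‖) := by
  have hinv' : IsUnit Rbar.det := (Matrix.isUnit_iff_isUnit_det Rbar).mp hinv
  have hRR : Rbar * Rbar⁻¹ = 1 := Matrix.mul_nonsing_inv Rbar hinv'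
  have hRR' : Rbar⁻¹ * Rbar = 1 := Matrix.nonsing_inv_mul Rbar hinv'
  have hQ : Qbar = (X + D) * Rbar⁻¹ := by
    calc Qbar = Qbar * Rbar * Rbar⁻¹ := by
          rw [Matrix.mul_assoc, hRR, Matrix.mul_one]
    _ = (X + D) * Rbar⁻¹ := by rw [hQR]
  have hone : (1 : Matrix (Fin s) (Fin s) ℝ)
      = (Rbar⁻¹)ᵀ * (Rbarᵀ * Rbar) * Rbar⁻¹ := by
    have h1 : (Rbar⁻¹)ᵀ * Rbarᵀ = 1 := by
      rw [← Matrix.transpose_mul, hRR, Matrix.transpose_one]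
    rw [← Matrix.mul_assoc, h1, Matrix.one_mul, hRR]
  have key : 1 - Qbarᵀ * Qbar
      = (Rbar⁻¹)ᵀ * (E - (Xᵀ * D + Dᵀ * X + Dᵀ * D)) * Rbar⁻¹ := by
    rw [hQ, hone, hChol]
    simp only [Matrix.transpose_mul, Matrix.transpose_add, Matrix.add_mul,
      Matrix.mul_add, Matrix.sub_mul, Matrix.mul_sub, Matrix.mul_assoc]
    abel
  refine ⟨key, ?_⟩
  rw [key]
  have hT : ‖(Rbar⁻¹)ᵀ‖ = ‖Rbar⁻¹‖ := by
    have := Matrix.l2_opNorm_conjTranspose (𝕜 := ℝ) Rbar⁻¹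
    rwa [Matrix.conjTranspose_eq_transpose_of_trivial] at this
  calc ‖(Rbar⁻¹)ᵀ * (E - (Xᵀ * D + Dᵀ * X + Dᵀ * D)) * Rbar⁻¹‖
      ≤ ‖(Rbar⁻¹)ᵀ * (E - (Xᵀ * D + Dᵀ * X + Dᵀ * D))‖ * ‖Rbar⁻¹‖ :=
        Matrix.l2_opNorm_mul _ _
    _ ≤ ‖(Rbar⁻¹)ᵀ‖ * ‖E - (Xᵀ * D + Dᵀ * X + Dᵀ * D)‖ * ‖Rbar⁻¹‖ :=
        mul_le_mul_of_nonneg_right (Matrix.l2_opNorm_mul _ _) (norm_nonneg _)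
    _ ≤ ‖Rbar⁻¹‖ * (‖E‖ + ‖Xᵀ * D + Dᵀ * X + Dᵀ * D‖) * ‖Rbar⁻¹‖ := by
        rw [hT]
        exact mul_le_mul_of_nonneg_right
          (mul_le_mul_of_nonneg_left (norm_sub_le _ _) (norm_nonneg _)) (norm_nonneg _)
    _ = ‖Rbar⁻¹‖ ^ 2 * (‖E‖ + ‖Xᵀ * D + Dᵀ * X + Dᵀ * D‖) := by ring
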